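/- For every n ≥ 3, the proper conflict-free chromatic number of the cycle C_n equals 3 if 3 divides n, equals 5 if n = 5, and equals 4 otherwise. -/

import Mathlib

open SimpleGraph

/-- A proper conflict-free coloring: proper, and every non-isolated vertex has a color
appearing exactly once in its open neighborhood. -/
def IsPCFColoring {V : Type*} (G : SimpleGraph V) {n : ℕ} (c : V → Fin n) : Prop :=
  (∀ u v, G.Adj u v → c u ≠ c v) ∧
  ∀ v : V, (G.neighborSet v).Nonempty →
    ∃ k : Fin n, ∃! u, u ∈ G.neighborSet v ∧ c u = k

/-- The PCF chromatic number. -/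
noncomputable def pcfChromNum {V : Type*} (G : SimpleGraph V) : ℕ :=
  sInf {n | ∃ c : V → Fin n, IsPCFColoring G c}

/-- The chromatic number (as a natural number). -/
noncomputable def chromNum {V : Type*} (G : SimpleGraph V) : ℕ :=
  sInf {n | G.Colorable n}

abbrev Cond (k m : ℕ) (c : Fin (k+3) → Fin m) : Prop :=
  ∀ v, c v ≠ c (v+1) ∧ c v ≠ c (v+2)

lemma fin_two_ne_zero (k : ℕ) : (2 : Fin (k+3)) ≠ 0 := by
  simp [Fin.ext_iff, Fin.val_two, Nat.mod_eq_of_lt (show 2 < k+3 by omega)]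

open Fin.CommRing in
lemma pcf_iff (k m : ℕ) (c : Fin (k+3) → Fin m) :
    IsPCFColoring (SimpleGraph.cycleGraph (k+3)) c ↔ Cond k m c := by
  have hadj : ∀ v : Fin (k+3), (cycleGraph (k+3)).Adj v (v+1) := by
    intro v
    rw [cycleGraph_adj]
    right; ring_nf
  have hns : ∀ v : Fin (k+3), (cycleGraph (k+3)).neighborSet v = {v - 1, v + 1} :=
    fun v => cycleGraph_neighborSet
  have hne2 : ∀ v : Fin (k+3), v - 1 ≠ v + 1 := by
    intro v h
    have : (2 : Fin (k+3)) = 0 := by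
      have := congrArg (· - (v - 1)) h
      simpa [sub_sub_cancel, one_add_one_eq_two] using this.symm
    exact fin_two_ne_zero k this
  constructor
  · rintro ⟨hp, hcf⟩ v
    constructor
    · exact hp v (v+1) (hadj v)
    · intro hneq
      obtain ⟨kc, u0, ⟨hmem, hcu⟩, huniq⟩ := hcf (v+1) ⟨v+2, by rw [hns]; simp [show v+1+1 = v+2 by ring]⟩
      rw [hns] at hmem
      have e1 : v + 1 - 1 = v := by ring
      have e2 : v + 1 + 1 = v + 2 := by ring
      rw [e1, e2] at hmem
      have hone : u0 = v ∨ u0 = v + 2 := hmem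
      have hvne : v ≠ v + 2 := by
        intro h; exact fin_two_ne_zero k (by have := congrArg (· - v) h; simpa using this.symm)
      rcases hone with h | h
      · have h2 : v + 2 = u0 := huniq (v+2) ⟨by rw [hns, e1, e2]; simp,
          by rw [← hneq, ← h]; exact hcu⟩
        exact hvne (h2.trans h).symm
      · have h2 : v = u0 := huniq v ⟨by rw [hns, e1, e2]; simp,
          by rw [hneq, ← h]; exact hcu⟩
        exact hvne (h2.trans h)
  · intro hc
    constructor
    · intro u v h
      rw [cycleGraph_adj] at h
      rcases h with h | h
      · have : u = v + 1 := by rw [← h]; ring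
        subst this; exact (hc v).1.symm
      · have : v = u + 1 := by rw [← h]; ring
        subst this; exact (hc u).1
    · intro v _
      refine ⟨c (v-1), v - 1, ⟨by rw [hns]; simp, rfl⟩, ?_⟩
      rintro u ⟨hmem, hcu⟩
      rw [hns] at hmem
      rcases hmem with h | h
      · exact h
      · exfalso
        have e : v - 1 + 2 = v + 1 := by ring
        refine (hc (v-1)).2 ?_
        rw [e, ← hcu, h]
/-- Build a coloring from a ℕ-valued function. -/
lemma cond_of_fun (k m : ℕ) (f : ℕ → ℕ) (hf : ∀ a, f a < m)
    (h : ∀ a, a < k+3 → f a ≠ f ((a+1) % (k+3)) ∧ f a ≠ f ((a+2) % (k+3))) :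
    ∃ c : Fin (k+3) → Fin m, Cond k m c := by
  refine ⟨fun v => ⟨f v.val, hf _⟩, fun v => ?_⟩
  have h1 : (v+1).val = (v.val + 1) % (k+3) := by
    rw [Fin.add_def]; congr 1
  have h2 : (v+2).val = (v.val + 2) % (k+3) := by
    rw [Fin.add_def]; congr 1
  have := h v.val v.isLt
  constructor
  · simp only [ne_eq, Fin.mk.injEq, h1]; exact this.1
  · simp only [ne_eq, Fin.mk.injEq, h2]; exact this.2

/-- Extract a ℕ-indexed periodic sequence from a coloring. -/
lemma fun_of_cond (k m : ℕ) (c : Fin (k+3) → Fin m) (hc : Cond k m c) :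
    ∃ F : ℕ → Fin m, (∀ a, F a ≠ F (a+1) ∧ F a ≠ F (a+2)) ∧
      (∀ a, F (a + (k+3)) = F a) := by
  refine ⟨fun a => c ⟨a % (k+3), Nat.mod_lt _ (by omega)⟩, fun a => ?_, fun a => ?_⟩
  · have e1 : (⟨(a+1) % (k+3), Nat.mod_lt _ (by omega)⟩ : Fin (k+3)) =
        ⟨a % (k+3), Nat.mod_lt _ (by omega)⟩ + 1 := by
      rw [Fin.ext_iff, Fin.add_def]
      simp only [Fin.val_one]
      conv_lhs => rw [Nat.add_mod, Nat.mod_eq_of_lt (show 1 < k+3 by omega)]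
    have e2 : (⟨(a+2) % (k+3), Nat.mod_lt _ (by omega)⟩ : Fin (k+3)) =
        ⟨a % (k+3), Nat.mod_lt _ (by omega)⟩ + 2 := by
      rw [Fin.ext_iff, Fin.add_def]
      simp only [Fin.val_two]
      conv_lhs => rw [Nat.add_mod, Nat.mod_eq_of_lt (show 2 < k+3 by omega)]
    constructor
    · simpa [e1] using (hc ⟨a % (k+3), Nat.mod_lt _ (by omega)⟩).1
    · simpa [e2] using (hc ⟨a % (k+3), Nat.mod_lt _ (by omega)⟩).2
  · simp [Nat.add_mod_right]
lemma fin3_forced : ∀ x y a b : Fin 3, x ≠ a → x ≠ b → y ≠ a → y ≠ b → a ≠ b → x = y := by decide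

lemma fin2_no : ∀ x y z : Fin 2, x ≠ y → x ≠ z → y ≠ z → False := by decide

lemma no_two_coloring (k : ℕ) : ¬ ∃ c : Fin (k+3) → Fin 2, Cond k 2 c := by
  rintro ⟨c, hc⟩
  obtain ⟨F, hF, -⟩ := fun_of_cond k 2 c hc
  exact fin2_no (F 0) (F 1) (F 2) (hF 0).1 (hF 0).2 (hF 1).1

lemma no_three_coloring (k : ℕ) (h3 : ¬ (3 ∣ (k+3))) :
    ¬ ∃ c : Fin (k+3) → Fin 3, Cond k 3 c := by
  rintro ⟨c, hc⟩
  obtain ⟨F, hF, hper⟩ := fun_of_cond k 3 c hc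
  have step : ∀ a, F (a+3) = F a := by
    intro a
    have p1 : F (a+1) ≠ F (a+3) := by
      have := (hF (a+1)).2; rwa [show a+1+2 = a+3 by omega] at this
    have p2 : F (a+2) ≠ F (a+3) := by
      have := (hF (a+2)).1; rwa [show a+2+1 = a+3 by omega] at this
    exact fin3_forced (F (a+3)) (F a) (F (a+1)) (F (a+2))
      p1.symm p2.symm (hF a).1 (hF a).2 (hF (a+1)).1
  have per3 : ∀ t r, F (3*t + r) = F r := by
    intro t
    induction t with
    | zero => simp
    | succ t ih =>
      intro r
      rw [show 3*(t+1) + r = (3*t + r) + 3 by ring, step, ih]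
  have h0 : F (k+3) = F 0 := by simpa using hper 0
  have h1 : F (3 * ((k+3)/3) + (k+3) % 3) = F ((k+3) % 3) := per3 _ _
  rw [show 3 * ((k+3)/3) + (k+3) % 3 = k+3 by omega] at h1
  have : (k+3) % 3 = 1 ∨ (k+3) % 3 = 2 := by omega
  rcases this with h | h
  · rw [h] at h1; exact (hF 0).1 (h0.symm.trans h1)
  · rw [h] at h1; exact (hF 0).2 (h0.symm.trans h1)

lemma cond_mono (k m m' : ℕ) (h : m ≤ m') (hc : ∃ c : Fin (k+3) → Fin m, Cond k m c) :
    ∃ c : Fin (k+3) → Fin m', Cond k m' c := by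
  obtain ⟨c, hc⟩ := hc
  refine ⟨fun v => Fin.castLE h (c v), fun v => ?_⟩
  exact ⟨fun he => (hc v).1 (Fin.castLE_injective h he),
         fun he => (hc v).2 (Fin.castLE_injective h he)⟩

lemma nat_sInf_eq {S : Set ℕ} {t : ℕ} (h1 : t ∈ S) (h2 : ∀ m < t, m ∉ S) : sInf S = t := by
  have hb : ∀ m ∈ S, t ≤ m := fun m hm => not_lt.1 fun h => h2 m h hm
  exact le_antisymm (Nat.sInf_le h1) (hb _ (Nat.sInf_mem ⟨t, h1⟩))
lemma succ_mod_cases (k a : ℕ) (ha : a < k+3) :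
    (a+1) % (k+3) = a+1 ∨ (a = k+2 ∧ (a+1) % (k+3) = 0) := by
  rcases Nat.lt_or_ge (a+1) (k+3) with h | h
  · exact Or.inl (Nat.mod_eq_of_lt h)
  · right
    have hak : a = k+2 := by omega
    subst hak
    exact ⟨rfl, by rw [show k+2+1 = k+3 from rfl]; exact Nat.mod_self _⟩

lemma succ2_mod_cases (k a : ℕ) (ha : a < k+3) :
    (a+2) % (k+3) = a+2 ∨ (a = k+1 ∧ (a+2) % (k+3) = 0) ∨
      (a = k+2 ∧ (a+2) % (k+3) = 1) := by
  rcases Nat.lt_or_ge (a+2) (k+3) with h | h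
  · exact Or.inl (Nat.mod_eq_of_lt h)
  · right
    rcases Nat.lt_or_ge a (k+2) with h' | h'
    · left
      have hak : a = k+1 := by omega
      subst hak
      exact ⟨rfl, by rw [show k+1+2 = k+3 from rfl]; exact Nat.mod_self _⟩
    · right
      have hak : a = k+2 := by omega
      subst hak
      refine ⟨rfl, ?_⟩
      rw [show k+2+2 = (k+3)+1 by omega, Nat.add_mod_left]
      exact Nat.mod_eq_of_lt (by omega)

lemma coloring_three (k : ℕ) (h3 : 3 ∣ (k+3)) :
    ∃ c : Fin (k+3) → Fin 3, Cond k 3 c := by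
  apply cond_of_fun k 3 (fun a => a % 3) (fun a => by show a % 3 < 3; omega)
  intro a ha
  have hm : (k+3) % 3 = 0 := by omega
  have hb := succ_mod_cases k a ha
  have hd := succ2_mod_cases k a ha
  set B := (a+1) % (k+3) with hB
  set D := (a+2) % (k+3) with hD
  show a % 3 ≠ B % 3 ∧ a % 3 ≠ D % 3
  rcases hb with h1 | ⟨h1, h1'⟩ <;> rcases hd with h2 | ⟨h2, h2'⟩ | ⟨h2, h2'⟩ <;>
    constructor <;> omega

lemma coloring_four_one (k : ℕ) (h3 : (k+3) % 3 = 1) :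
    ∃ c : Fin (k+3) → Fin 4, Cond k 4 c := by
  apply cond_of_fun k 4 (fun a => if a = k+2 then 3 else a % 3)
      (fun a => by show (if a = k+2 then 3 else a % 3) < 4; split <;> omega)
  intro a ha
  have hb := succ_mod_cases k a ha
  have hd := succ2_mod_cases k a ha
  set B := (a+1) % (k+3) with hB
  set D := (a+2) % (k+3) with hD
  show (if a = k+2 then 3 else a % 3) ≠ (if B = k+2 then 3 else B % 3) ∧
    (if a = k+2 then 3 else a % 3) ≠ (if D = k+2 then 3 else D % 3)
  rcases hb with h1 | ⟨h1, h1'⟩ <;> rcases hd with h2 | ⟨h2, h2'⟩ | ⟨h2, h2'⟩ <;>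
    constructor <;> split_ifs <;> omega

lemma coloring_four_two (k : ℕ) (h3 : (k+3) % 3 = 2) (h8 : 8 ≤ k+3) :
    ∃ c : Fin (k+3) → Fin 4, Cond k 4 c := by
  apply cond_of_fun k 4 (fun a => if a < k+3-8 then a % 3 else (a - (k+3-8)) % 4)
      (fun a => by show (if a < k+3-8 then a % 3 else (a - (k+3-8)) % 4) < 4; split <;> omega)
  intro a ha
  have hm : (k+3-8) % 3 = 0 := by omega
  have hb := succ_mod_cases k a ha
  have hd := succ2_mod_cases k a ha
  set B := (a+1) % (k+3) with hB
  set D := (a+2) % (k+3) with hD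
  show (if a < k+3-8 then a % 3 else (a - (k+3-8)) % 4) ≠
      (if B < k+3-8 then B % 3 else (B - (k+3-8)) % 4) ∧
    (if a < k+3-8 then a % 3 else (a - (k+3-8)) % 4) ≠
      (if D < k+3-8 then D % 3 else (D - (k+3-8)) % 4)
  rcases hb with h1 | ⟨h1, h1'⟩ <;> rcases hd with h2 | ⟨h2, h2'⟩ | ⟨h2, h2'⟩ <;>
    constructor <;> split_ifs <;> omega
lemma coloring_five : ∃ c : Fin (2+3) → Fin 5, Cond 2 5 c := by
  apply cond_of_fun 2 5 (fun a => a % 5) (fun a => by show a % 5 < 5; omega)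
  intro a ha
  show a % 5 ≠ ((a+1) % 5) % 5 ∧ a % 5 ≠ ((a+2) % 5) % 5
  omega

lemma fin4_no : ∀ x0 x1 x2 x3 x4 : Fin 4, x0≠x1 → x0≠x2 → x1≠x2 → x1≠x3 → x2≠x3 →
    x2≠x4 → x3≠x4 → x3≠x0 → x4≠x0 → x4≠x1 → False := by decide

lemma no_four_c5 : ¬ ∃ c : Fin (2+3) → Fin 4, Cond 2 4 c := by
  rintro ⟨c, hc⟩
  have h0 := hc 0
  have h1 := hc 1
  have h2 := hc 2
  have h3 := hc 3
  have h4 := hc 4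
  rw [show (0+1 : Fin (2+3)) = 1 by decide, show (0+2 : Fin (2+3)) = 2 by decide] at h0
  rw [show (1+1 : Fin (2+3)) = 2 by decide, show (1+2 : Fin (2+3)) = 3 by decide] at h1
  rw [show (2+1 : Fin (2+3)) = 3 by decide, show (2+2 : Fin (2+3)) = 4 by decide] at h2
  rw [show (3+1 : Fin (2+3)) = 4 by decide, show (3+2 : Fin (2+3)) = 0 by decide] at h3
  rw [show (4+1 : Fin (2+3)) = 0 by decide, show (4+2 : Fin (2+3)) = 1 by decide] at h4
  exact fin4_no (c 0) (c 1) (c 2) (c 3) (c 4) h0.1 h0.2 h1.1 h1.2 h2.1 h2.2 h3.1 h3.2 h4.1 h4.2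

theorem pcf_cycle (n : ℕ) (hn : 3 ≤ n) :
    pcfChromNum (SimpleGraph.cycleGraph n) =
      if 3 ∣ n then 3 else if n = 5 then 5 else 4 := by
  obtain ⟨k, rfl⟩ : ∃ k, n = k + 3 := ⟨n - 3, by omega⟩
  have hset : {m | ∃ c : Fin (k+3) → Fin m, IsPCFColoring (cycleGraph (k+3)) c} =
      {m | ∃ c : Fin (k+3) → Fin m, Cond k m c} :=
    Set.ext fun m => exists_congr fun c => pcf_iff k m c
  rw [pcfChromNum, hset]
  split_ifs with h3 h5
  · -- 3 ∣ k+3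
    refine nat_sInf_eq (coloring_three k h3) ?_
    intro m hm hmem
    exact no_two_coloring k (cond_mono k m 2 (by omega) hmem)
  · -- k+3 = 5
    have hk : k = 2 := by omega
    subst hk
    refine nat_sInf_eq coloring_five ?_
    intro m hm hmem
    exact no_four_c5 (cond_mono 2 m 4 (by omega) hmem)
  · -- otherwise
    have hr : (k+3) % 3 = 1 ∨ (k+3) % 3 = 2 := by omega
    have hmem4 : ∃ c : Fin (k+3) → Fin 4, Cond k 4 c := by
      rcases hr with h | h
      · exact coloring_four_one k h
      · exact coloring_four_two k h (by omega)
    refine nat_sInf_eq hmem4 ?_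
    intro m hm hmem
    exact no_three_coloring k h3 (cond_mono k m 3 (by omega) hmem)
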